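/- Under the missing-at-random assumption S ⊥ Δ | (T, A, W, Y) and the sampling-positivity assumption P(Δ = 1 | T = t, A = a, W = w, Y = y) > 0 for all (t, w, y) with P(T = t, A = a, W = w, Y = y) > 0, one has E[S | A = a, T = t, W = w] = E[ E[S | Δ = 1, A = a, T = t, Y, W] | A = a, T = t, W = w ], i.e., the full-data conditional mean of S is identified from observations with Δ = 1. -/
import Mathlib


open Finset Real
open scoped Classical BigOperators

noncomputable section

/-- Probability of an event on a finite space with pmf `p`. -/
def pr {Ω : Type*} [Fintype Ω] (p : Ω → ℝ) (E : Ω → Prop) : ℝ :=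
  ∑ ω, if E ω then p ω else 0

/-- Expectation of `f` under pmf `p`. -/
def ex {Ω : Type*} [Fintype Ω] (p : Ω → ℝ) (f : Ω → ℝ) : ℝ :=
  ∑ ω, p ω * f ω

/-- Conditional expectation of `f` given the event `E`. -/
def cex {Ω : Type*} [Fintype Ω] (p : Ω → ℝ) (f : Ω → ℝ) (E : Ω → Prop) : ℝ :=
  (∑ ω, if E ω then p ω * f ω else 0) / pr p E

/-- Conditional probability of `E` given `F`. -/
def cpr {Ω : Type*} [Fintype Ω] (p : Ω → ℝ) (E F : Ω → Prop) : ℝ :=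
  pr p (fun ω => E ω ∧ F ω) / pr p F

/-- `p` is a probability mass function. -/
structure IsPMF {Ω : Type*} [Fintype Ω] (p : Ω → ℝ) : Prop where
  nonneg : ∀ ω, 0 ≤ p ω
  sum_one : ∑ ω, p ω = 1

/-- Conditional independence of `X` and `Y` given `Z` on a finite space. -/
def CondIndepFun {Ω : Type*} [Fintype Ω] {α β γ : Type*}
    (p : Ω → ℝ) (X : Ω → α) (Y : Ω → β) (Z : Ω → γ) : Prop :=
  ∀ x y z, 0 < pr p (fun ω => Z ω = z) →
    cpr p (fun ω => X ω = x ∧ Y ω = y) (fun ω => Z ω = z) =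
      cpr p (fun ω => X ω = x) (fun ω => Z ω = z) *
      cpr p (fun ω => Y ω = y) (fun ω => Z ω = z)

lemma pr_congr' {Ω : Type*} [Fintype Ω] (p : Ω → ℝ) {E F : Ω → Prop}
    (h : ∀ ω, E ω ↔ F ω) : pr p E = pr p F :=
  Finset.sum_congr rfl fun ω _ => if_congr (h ω) rfl rfl

lemma pr_nonneg' {Ω : Type*} [Fintype Ω] {p : Ω → ℝ} (hnn : ∀ ω, 0 ≤ p ω)
    (E : Ω → Prop) : 0 ≤ pr p E :=
  Finset.sum_nonneg fun ω _ => by split <;> simp [hnn ω]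

lemma pr_zero_imp {Ω : Type*} [Fintype Ω] {p : Ω → ℝ} (hnn : ∀ ω, 0 ≤ p ω)
    {E : Ω → Prop} (h : pr p E = 0) (ω : Ω) (hω : E ω) : p ω = 0 := by
  have := (Finset.sum_eq_zero_iff_of_nonneg
    (fun ω _ => by split <;> simp [hnn ω])).mp h ω (Finset.mem_univ ω)
  simpa [hω] using this

/-- Numerator of a conditional expectation. -/
def exnum {Ω : Type*} [Fintype Ω] (p f : Ω → ℝ) (E : Ω → Prop) : ℝ :=
  ∑ ω, if E ω then p ω * f ω else 0

lemma cex_eq_exnum_div {Ω : Type*} [Fintype Ω] (p f : Ω → ℝ) (E : Ω → Prop) :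
    cex p f E = exnum p f E / pr p E := rfl

lemma exnum_congr {Ω : Type*} [Fintype Ω] (p f : Ω → ℝ) {E F : Ω → Prop}
    (h : ∀ ω, E ω ↔ F ω) : exnum p f E = exnum p f F :=
  Finset.sum_congr rfl fun ω _ => if_congr (h ω) rfl rfl

/-- Fiberwise decomposition of a weighted sum over the values of `S`. -/
lemma exnum_eq_sum_image {Ω : Type*} [Fintype Ω] (p : Ω → ℝ) (S : Ω → ℝ)
    (E : Ω → Prop) :
    exnum p S E = ∑ s ∈ Finset.image S Finset.univ,
      s * pr p (fun ω => S ω = s ∧ E ω) := by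
  unfold exnum pr
  simp_rw [Finset.mul_sum, mul_ite, mul_zero]
  rw [Finset.sum_comm]
  refine Finset.sum_congr rfl fun ω _ => ?_
  rw [Finset.sum_eq_single (S ω)]
  · by_cases h : E ω <;> simp [h, mul_comm]
  · intro s _ hs
    rw [if_neg]
    exact fun h => hs h.1.symm
  · intro h
    exact absurd (Finset.mem_image_of_mem S (Finset.mem_univ ω)) h

/-- Split an `exnum` according to the value of a Boolean variable. -/
lemma exnum_split {Ω : Type*} [Fintype Ω] (p f : Ω → ℝ) (E : Ω → Prop)
    (Y : Ω → Bool) :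
    exnum p f E = exnum p f (fun ω => E ω ∧ Y ω = true) +
      exnum p f (fun ω => E ω ∧ Y ω = false) := by
  unfold exnum
  rw [← Finset.sum_add_distrib]
  refine Finset.sum_congr rfl fun ω _ => ?_
  by_cases hEω : E ω <;> cases hY : Y ω <;> simp [hEω, hY]

lemma exnum_zero_of_pr_zero {Ω : Type*} [Fintype Ω] {p : Ω → ℝ}
    (hnn : ∀ ω, 0 ≤ p ω) (f : Ω → ℝ) {E : Ω → Prop} (h : pr p E = 0) :
    exnum p f E = 0 := by
  refine Finset.sum_eq_zero fun ω _ => ?_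
  split
  · next hω => rw [pr_zero_imp hnn h ω hω, zero_mul]
  · rfl

theorem observed_data_identification
    {Ω 𝕋 𝔸 𝕎 : Type*} [Fintype Ω]
    (p : Ω → ℝ) (hp : IsPMF p)
    (T : Ω → 𝕋) (A : Ω → 𝔸) (W : Ω → 𝕎) (Y : Ω → Bool) (S : Ω → ℝ) (Δ : Ω → Bool)
    (a : 𝔸)
    (hMAR : CondIndepFun p S Δ (fun ω => (T ω, A ω, W ω, Y ω)))
    (hpos : ∀ t w y, 0 < pr p (fun ω => T ω = t ∧ A ω = a ∧ W ω = w ∧ Y ω = y) →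
      0 < cpr p (fun ω => Δ ω = true)
        (fun ω => T ω = t ∧ A ω = a ∧ W ω = w ∧ Y ω = y)) :
    ∀ t w, 0 < pr p (fun ω => A ω = a ∧ T ω = t ∧ W ω = w) →
      cex p S (fun ω => A ω = a ∧ T ω = t ∧ W ω = w) =
        cex p (fun ω => cex p S
            (fun ω' => Δ ω' = true ∧ A ω' = a ∧ T ω' = t ∧ Y ω' = Y ω ∧ W ω' = w))
          (fun ω => A ω = a ∧ T ω = t ∧ W ω = w) := by
  intro t w hE
  have hnn := hp.nonneg
  -- key claim for each value y of Y
  have key : ∀ y : Bool,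
      exnum p S (fun ω => (A ω = a ∧ T ω = t ∧ W ω = w) ∧ Y ω = y) =
      cex p S (fun ω' => Δ ω' = true ∧ A ω' = a ∧ T ω' = t ∧ Y ω' = y ∧ W ω' = w) *
        pr p (fun ω => (A ω = a ∧ T ω = t ∧ W ω = w) ∧ Y ω = y) := by
    intro y
    rcases eq_or_lt_of_le (pr_nonneg' hnn
        (fun ω => (A ω = a ∧ T ω = t ∧ W ω = w) ∧ Y ω = y)) with hq | hq
    · rw [← hq, mul_zero]
      exact exnum_zero_of_pr_zero hnn S hq.symm
    · set z : 𝕋 × 𝔸 × 𝕎 × Bool := (t, a, w, y) with hz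
      have hZiff : ∀ ω, (((A ω = a ∧ T ω = t ∧ W ω = w) ∧ Y ω = y) ↔
          (T ω, A ω, W ω, Y ω) = z) := by
        intro ω; simp only [hz, Prod.mk.injEq]; tauto
      have hqZ : 0 < pr p (fun ω => (T ω, A ω, W ω, Y ω) = z) := by
        rwa [← pr_congr' p hZiff]
      have hTiff : ∀ ω, ((T ω = t ∧ A ω = a ∧ W ω = w ∧ Y ω = y) ↔
          (T ω, A ω, W ω, Y ω) = z) := by
        intro ω; simp only [hz, Prod.mk.injEq]
      have hposT : 0 < pr p (fun ω => T ω = t ∧ A ω = a ∧ W ω = w ∧ Y ω = y) := by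
        rwa [pr_congr' p hTiff]
      have hcpr := hpos t w y hposT
      unfold cpr at hcpr
      have hq1T : 0 < pr p (fun ω => Δ ω = true ∧
          (T ω = t ∧ A ω = a ∧ W ω = w ∧ Y ω = y)) := by
        by_contra hle
        push_neg at hle
        have h0 : pr p (fun ω => Δ ω = true ∧
            (T ω = t ∧ A ω = a ∧ W ω = w ∧ Y ω = y)) = 0 :=
          le_antisymm hle (pr_nonneg' hnn _)
        rw [h0, zero_div] at hcpr
        exact lt_irrefl 0 hcpr
      have hq1 : 0 < pr p (fun ω => Δ ω = true ∧ (T ω, A ω, W ω, Y ω) = z) := by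
        rwa [pr_congr' p (E := fun ω => Δ ω = true ∧
          (T ω = t ∧ A ω = a ∧ W ω = w ∧ Y ω = y)) (fun ω => and_congr_right
            fun _ => hTiff ω)] at hq1T
      -- MAR consequence, per value s of S
      have hmar : ∀ s : ℝ,
          pr p (fun ω => S ω = s ∧ (T ω, A ω, W ω, Y ω) = z) *
            pr p (fun ω => Δ ω = true ∧ (T ω, A ω, W ω, Y ω) = z) =
          pr p (fun ω => S ω = s ∧ (Δ ω = true ∧ (T ω, A ω, W ω, Y ω) = z)) *
            pr p (fun ω => (T ω, A ω, W ω, Y ω) = z) := by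
        intro s
        have h := hMAR s true z hqZ
        unfold cpr at h
        have hne : pr p (fun ω => (T ω, A ω, W ω, Y ω) = z) ≠ 0 := ne_of_gt hqZ
        rw [div_mul_div_comm, div_eq_div_iff hne (by positivity)] at h
        have h2 : pr p (fun ω => (S ω = s ∧ Δ ω = true) ∧ (T ω, A ω, W ω, Y ω) = z) *
            pr p (fun ω => (T ω, A ω, W ω, Y ω) = z) =
            pr p (fun ω => S ω = s ∧ (T ω, A ω, W ω, Y ω) = z) *
            pr p (fun ω => Δ ω = true ∧ (T ω, A ω, W ω, Y ω) = z) := by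
          refine mul_right_cancel₀ hne ?_
          rw [mul_assoc]
          linarith [h]
        rw [pr_congr' p (E := fun ω => (S ω = s ∧ Δ ω = true) ∧
            (T ω, A ω, W ω, Y ω) = z)
          (fun ω => and_assoc)] at h2
        linarith [h2]
      -- rewrite everything in terms of the event `Z = z`
      have hDiff : ∀ ω, ((Δ ω = true ∧ A ω = a ∧ T ω = t ∧ Y ω = y ∧ W ω = w) ↔
          (Δ ω = true ∧ (T ω, A ω, W ω, Y ω) = z)) := by
        intro ω; simp only [hz, Prod.mk.injEq]; tauto
      rw [exnum_congr p S hZiff, pr_congr' p hZiff, cex_eq_exnum_div,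
        exnum_congr p S hDiff, pr_congr' p hDiff]
      rw [div_mul_eq_mul_div, eq_div_iff (ne_of_gt hq1)]
      rw [exnum_eq_sum_image p S (fun ω => (T ω, A ω, W ω, Y ω) = z),
        exnum_eq_sum_image p S (fun ω => Δ ω = true ∧ (T ω, A ω, W ω, Y ω) = z),
        Finset.sum_mul, Finset.sum_mul]
      refine Finset.sum_congr rfl fun s _ => ?_
      rw [mul_assoc, mul_assoc]
      congr 1
      exact hmar s
  -- conclude by splitting the conditioning event according to the value of Y
  rw [cex_eq_exnum_div, cex_eq_exnum_div]
  congr 1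
  rw [exnum_split p S (fun ω => A ω = a ∧ T ω = t ∧ W ω = w) Y,
    exnum_split p (fun ω => cex p S (fun ω' => Δ ω' = true ∧ A ω' = a ∧ T ω' = t ∧
      Y ω' = Y ω ∧ W ω' = w)) (fun ω => A ω = a ∧ T ω = t ∧ W ω = w) Y]
  have hconst : ∀ y : Bool,
      exnum p (fun ω => cex p S (fun ω' => Δ ω' = true ∧ A ω' = a ∧ T ω' = t ∧
          Y ω' = Y ω ∧ W ω' = w))
        (fun ω => (A ω = a ∧ T ω = t ∧ W ω = w) ∧ Y ω = y) =
      cex p S (fun ω' => Δ ω' = true ∧ A ω' = a ∧ T ω' = t ∧ Y ω' = y ∧ W ω' = w) *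
        pr p (fun ω => (A ω = a ∧ T ω = t ∧ W ω = w) ∧ Y ω = y) := by
    intro y
    unfold exnum pr
    rw [Finset.mul_sum]
    refine Finset.sum_congr rfl fun ω _ => ?_
    beta_reduce
    by_cases hc : (A ω = a ∧ T ω = t ∧ W ω = w) ∧ Y ω = y
    · rw [if_pos hc, if_pos hc, hc.2, mul_comm]
    · rw [if_neg hc, if_neg hc, mul_zero]
  rw [hconst true, hconst false, key true, key false]
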